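/- (Core of Lemma B.4, lower bound Ω(T^{2−c})) For every real c with 1 < c < 2 there exist a constant C > 0 and an integer T₀ such that for every integer T ≥ T₀ the following holds. Let μ(m) = Σ_{n=1}^{m} (n+1)^{−c}, F(m) = Σ_{n=1}^{m} μ(n), and P = ⌈(2−c)^{1/(c−1)}·T⌉. Then there exists a real ε with 0 < ε < μ(P) such that for every integer s with 0 ≤ s ≤ P: ( F(T) − F(T−s) − F(P−s) + (μ(P) − ε)(P − 2s) ) / 2 ≥ C·T^{2−c}. -/
import Mathlib

set_option maxHeartbeats 1000000


/-- `μ(m) = Σ_{n=1}^{m} (n+1)^(-c)`. -/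
noncomputable def mu (c : ℝ) (m : ℕ) : ℝ := ∑ n ∈ Finset.Icc 1 m, ((n : ℝ) + 1) ^ (-c)

/-- `F(m) = Σ_{n=1}^{m} μ(n)`. -/
noncomputable def F (c : ℝ) (m : ℕ) : ℝ := ∑ n ∈ Finset.Icc 1 m, mu c n

/-- The change point `P = ⌈(2-c)^(1/(c-1))·T⌉`. -/
noncomputable def P (c : ℝ) (T : ℕ) : ℕ := ⌈(2 - c) ^ (1 / (c - 1)) * (T : ℝ)⌉₊

private lemma mu_mono (c : ℝ) : Monotone (mu c) := fun a b hab =>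
  Finset.sum_le_sum_of_subset_of_nonneg (Finset.Icc_subset_Icc_right hab)
    fun i _ _ => Real.rpow_nonneg (by positivity) _

private lemma mu_Ioc (c : ℝ) (k : ℕ) :
    mu c k = ∑ n ∈ Finset.Ioc 0 k, ((n : ℝ) + 1) ^ (-c) := rfl

private lemma F_Ioc (c : ℝ) (k : ℕ) : F c k = ∑ n ∈ Finset.Ioc 0 k, mu c n := rfl

/-- (Core of Lemma B.4, lower bound Ω(T^(2-c))) For every real `1 < c < 2` there are a
constant `C > 0` and an integer `T₀` such that for every `T ≥ T₀` there is a real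
`0 < ε < μ(P)` with
`(F(T) - F(T-s) - F(P-s) + (μ(P) - ε)(P - 2s))/2 ≥ C·T^(2-c)` for every integer `0 ≤ s ≤ P`. -/
theorem lemmaB4_core (c : ℝ) (hc1 : 1 < c) (hc2 : c < 2) :
    ∃ C : ℝ, 0 < C ∧ ∃ T₀ : ℕ, ∀ T : ℕ, T₀ ≤ T →
      ∃ ε : ℝ, 0 < ε ∧ ε < mu c (P c T) ∧
        ∀ s : ℕ, s ≤ P c T →
          C * (T : ℝ) ^ (2 - c) ≤
            (F c T - F c (T - s) - F c (P c T - s) +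
              (mu c (P c T) - ε) * ((P c T : ℝ) - 2 * (s : ℝ))) / 2 := by
  have hc21 : (0:ℝ) < 2 - c := by linarith
  have hcm1 : (0:ℝ) < c - 1 := by linarith
  set α : ℝ := (2 - c) ^ (1 / (c - 1)) with hα_def
  have hα_pos : 0 < α := Real.rpow_pos_of_pos hc21 _
  have hα_lt : α < 1/2 := by
    have h1 : Real.log (2 - c) ≤ (2 - c) - 1 := Real.log_le_sub_one_of_pos hc21
    have h2 : α = Real.exp (Real.log (2 - c) * (1 / (c - 1))) := by
      rw [hα_def, Real.rpow_def_of_pos hc21]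
    have h3 : Real.log (2 - c) * (1 / (c - 1)) ≤ -1 := by
      have h4 : Real.log (2 - c) * (1 / (c - 1)) ≤ ((2 - c) - 1) * (1 / (c - 1)) :=
        mul_le_mul_of_nonneg_right h1 (by positivity)
      have h5 : ((2 - c) - 1) * (1 / (c - 1)) = -1 := by
        field_simp
        ring
      linarith
    have h6 : α ≤ Real.exp (-1) := by
      rw [h2]; exact Real.exp_le_exp.mpr h3
    have h7 : Real.exp (-1) * Real.exp 1 = 1 := by
      rw [← Real.exp_add]; norm_num
    have h8 := Real.exp_one_gt_d9
    nlinarith [Real.exp_pos (-1)]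
  set A : ℝ := α ^ (2 - c) with hA_def
  have hA_pos : 0 < A := Real.rpow_pos_of_pos hα_pos _
  refine ⟨A / 1024, by positivity, ?_⟩
  set K : ℝ := A / (256 * α) with hK_def
  have hK_pos : 0 < K := by positivity
  have hev1 : ∀ᶠ T : ℕ in Filter.atTop, 8 ≤ α * T :=
    (tendsto_natCast_atTop_atTop.const_mul_atTop hα_pos).eventually_ge_atTop 8
  have hev2 : ∀ᶠ T : ℕ in Filter.atTop, 2 ≤ (1 - 2*α) * T :=
    (tendsto_natCast_atTop_atTop.const_mul_atTop (by linarith)).eventually_ge_atTop 2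
  have hev3 : ∀ᶠ T : ℕ in Filter.atTop, K * (T:ℝ) ^ (1 - c) < 2 ^ (-c) := by
    have h0 : Filter.Tendsto (fun T : ℕ => K * (T:ℝ) ^ (1 - c)) Filter.atTop (nhds 0) := by
      have h1 := (tendsto_rpow_neg_atTop hcm1).comp tendsto_natCast_atTop_atTop
      have h2 : Filter.Tendsto (fun T : ℕ => (T:ℝ) ^ (1 - c)) Filter.atTop (nhds 0) := by
        simpa [Function.comp_def, neg_sub] using h1
      simpa using h2.const_mul K
    exact h0.eventually_lt_const (by positivity)
  obtain ⟨T₀, hT₀⟩ := Filter.eventually_atTop.mp ((hev1.and hev2).and hev3)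
  refine ⟨T₀, fun T hT => ?_⟩
  obtain ⟨⟨h8, h2T⟩, hεsmall⟩ := hT₀ T hT
  have hTn : 0 < T := by
    rcases Nat.eq_zero_or_pos T with rfl | h
    · norm_num at h8
    · exact h
  have hT_pos : (0:ℝ) < T := by exact_mod_cast hTn
  have hPeq : P c T = ⌈α * (T:ℝ)⌉₊ := by rw [hα_def]; simp [P]
  set Pn := P c T with hPn
  have hPα : α * T ≤ (Pn:ℝ) := by rw [hPeq]; exact Nat.le_ceil _
  have hPup : (Pn:ℝ) < α * T + 1 := by rw [hPeq]; exact Nat.ceil_lt_add_one (by positivity)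
  have hP8 : (8:ℝ) ≤ (Pn:ℝ) := le_trans h8 hPα
  have hPle : (Pn:ℝ) ≤ 2 * (α * T) := by linarith
  have h2P : 2 * (Pn:ℝ) < T := by nlinarith
  have h2Pn : 2 * Pn ≤ T := by exact_mod_cast le_of_lt (show (2 * Pn : ℝ) < T by push_cast; linarith)
  have hP_pos : 0 < Pn := by exact_mod_cast lt_of_lt_of_le (by norm_num : (0:ℝ) < 8) hP8
  have hPT : Pn ≤ T := by omega
  have hPpos' : (0:ℝ) < (Pn:ℝ) := by linarith
  set ε : ℝ := K * (T:ℝ) ^ (1 - c) with hε_def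
  have hε_pos : 0 < ε := mul_pos hK_pos (Real.rpow_pos_of_pos hT_pos _)
  have hεlt : ε < (2:ℝ) ^ (-c) := by rw [hε_def]; exact hεsmall
  have hmuP1 : (2:ℝ) ^ (-c) ≤ mu c Pn := by
    have h1 : mu c 1 ≤ mu c Pn := mu_mono c hP_pos
    have h2 : mu c 1 = (2:ℝ) ^ (-c) := by norm_num [mu]
    linarith
  have hT2c : (T:ℝ) ^ (2 - c) = (T:ℝ) ^ (1 - c) * T := by
    rw [show (2 - c) = (1 - c) + 1 by ring, Real.rpow_add_one (ne_of_gt hT_pos)]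
  have hP2c : (Pn:ℝ) ^ (2 - c) = (Pn:ℝ)^2 * (Pn:ℝ) ^ (-c) := by
    rw [show (2 - c) = ((2:ℕ):ℝ) + (-c) by push_cast; ring, Real.rpow_add hPpos',
      Real.rpow_natCast]
  have hAT : A * (T:ℝ) ^ (2 - c) ≤ (Pn:ℝ) ^ (2 - c) := by
    calc A * (T:ℝ) ^ (2 - c) = (α * T) ^ (2 - c) := by
          rw [hA_def, ← Real.mul_rpow hα_pos.le hT_pos.le]
      _ ≤ (Pn:ℝ) ^ (2 - c) := Real.rpow_le_rpow (by positivity) hPα (by linarith)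
  refine ⟨ε, hε_pos, lt_of_lt_of_le hεlt hmuP1, fun s hs => ?_⟩
  set m := Pn - s with hm_def
  have hms : m + s = Pn := Nat.sub_add_cancel hs
  have hmcast : (m:ℝ) + s = (Pn:ℝ) := by exact_mod_cast hms
  have hmP : m ≤ Pn := Nat.sub_le _ _
  have hsT : s ≤ T := le_trans hs hPT
  -- Step 1: F T - F (T-s) ≥ s * μ(P)
  have hsum : F c (T - s) + ∑ n ∈ Finset.Ioc (T - s) T, mu c n = F c T := by
    rw [F_Ioc, F_Ioc]
    exact Finset.sum_Ioc_consecutive _ (Nat.zero_le _) (Nat.sub_le _ _)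
  have hS : (s:ℝ) * mu c Pn ≤ ∑ n ∈ Finset.Ioc (T - s) T, mu c n := by
    have hbound : ∀ n ∈ Finset.Ioc (T - s) T, mu c Pn ≤ mu c n := by
      intro n hn
      rw [Finset.mem_Ioc] at hn
      exact mu_mono c (by omega)
    have h := Finset.card_nsmul_le_sum _ _ _ hbound
    rwa [Nat.card_Ioc, show T - (T - s) = s by omega, nsmul_eq_mul] at h
  -- F m ≤ m * μ(P)
  have hFm : F c m ≤ (m:ℝ) * mu c Pn := by
    have hbound : ∀ n ∈ Finset.Icc 1 m, mu c n ≤ mu c Pn := fun n hn =>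
      mu_mono c (le_trans (Finset.mem_Icc.mp hn).2 hmP)
    have h := Finset.sum_le_card_nsmul _ _ _ hbound
    rwa [Nat.card_Icc, Nat.add_sub_cancel, nsmul_eq_mul] at h
  have hμPm : 0 ≤ mu c Pn * m - F c m := by nlinarith [hFm]
  set q := Pn / 4 with hq_def
  have hq4 : (q:ℝ) ≤ (Pn:ℝ)/4 := by
    rw [hq_def]; exact_mod_cast Nat.cast_div_le
  have hq_low : (Pn:ℝ)/8 ≤ (q:ℝ) := by
    have h1 : Pn ≤ 4 * q + 3 := by omega
    have h1' : (Pn:ℝ) ≤ 4 * (q:ℝ) + 3 := by exact_mod_cast h1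
    linarith
  -- main inequality
  have hmain : 2 * (A/1024 * (T:ℝ) ^ (2 - c)) ≤ mu c Pn * m - F c m + ε * ((s:ℝ) - m) := by
    rcases le_or_gt m q with hcase | hcase
    · -- m small: ε term dominates
      have hmq : (m:ℝ) ≤ (q:ℝ) := by exact_mod_cast hcase
      have hsm : (α * T)/2 ≤ (s:ℝ) - m := by linarith
      have e : ε * ((α * (T:ℝ))/2) = A/512 * (T:ℝ) ^ (2 - c) := by
        rw [hε_def, hT2c, hK_def]
        field_simp
        ring
      have h2 : A/512 * (T:ℝ) ^ (2 - c) ≤ ε * ((s:ℝ) - m) := by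
        calc A/512 * (T:ℝ) ^ (2 - c) = ε * ((α * T)/2) := e.symm
          _ ≤ ε * ((s:ℝ) - m) := mul_le_mul_of_nonneg_left hsm hε_pos.le
      linarith
    · -- m large: h(m) dominates
      have hqP : q ≤ Pn := Nat.div_le_self _ _
      have hstep1 : (q:ℝ) * (mu c Pn - mu c q) ≤ mu c Pn * m - F c m := by
        have e : ∑ n ∈ Finset.Icc 1 m, (mu c Pn - mu c n) = mu c Pn * (m:ℝ) - F c m := by
          rw [Finset.sum_sub_distrib, Finset.sum_const, Nat.card_Icc, Nat.add_sub_cancel,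
              nsmul_eq_mul]
          simp only [F]
          ring
        have h2 : (q:ℝ) * (mu c Pn - mu c q) ≤ ∑ n ∈ Finset.Icc 1 m, (mu c Pn - mu c n) := by
          calc (q:ℝ) * (mu c Pn - mu c q)
              = ∑ _n ∈ Finset.Icc 1 q, (mu c Pn - mu c q) := by
                rw [Finset.sum_const, Nat.card_Icc, Nat.add_sub_cancel, nsmul_eq_mul]
            _ ≤ ∑ n ∈ Finset.Icc 1 q, (mu c Pn - mu c n) :=
                Finset.sum_le_sum (fun n hn => by
                  have := mu_mono c (Finset.mem_Icc.mp hn).2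
                  linarith)
            _ ≤ ∑ n ∈ Finset.Icc 1 m, (mu c Pn - mu c n) :=
                Finset.sum_le_sum_of_subset_of_nonneg
                  (Finset.Icc_subset_Icc_right (le_of_lt hcase))
                  (fun n hn _ => by
                    have := mu_mono c (le_trans (Finset.mem_Icc.mp hn).2 hmP)
                    linarith)
        linarith [e ▸ h2]
      have hstep2 : ((Pn:ℝ) - q) * ((Pn:ℝ) + 1) ^ (-c) ≤ mu c Pn - mu c q := by
        have hsum2 : mu c q + ∑ n ∈ Finset.Ioc q Pn, ((n:ℝ) + 1) ^ (-c) = mu c Pn := by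
          rw [mu_Ioc, mu_Ioc]
          exact Finset.sum_Ioc_consecutive _ (Nat.zero_le _) hqP
        have hb : ∀ n ∈ Finset.Ioc q Pn, ((Pn:ℝ) + 1) ^ (-c) ≤ ((n:ℝ) + 1) ^ (-c) := by
          intro n hn
          rw [Finset.mem_Ioc] at hn
          have hn2 : (n:ℝ) ≤ (Pn:ℝ) := by exact_mod_cast hn.2
          exact Real.rpow_le_rpow_of_nonpos (by positivity) (by linarith) (by linarith)
        have h := Finset.card_nsmul_le_sum _ _ _ hb
        rw [Nat.card_Ioc, nsmul_eq_mul] at h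
        have hc3 : ((Pn - q : ℕ):ℝ) = (Pn:ℝ) - (q:ℝ) := by
          push_cast [hqP]
          ring
        rw [hc3] at h
        linarith
      have hstep3 : (1/4 : ℝ) * (Pn:ℝ) ^ (-c) ≤ ((Pn:ℝ) + 1) ^ (-c) := by
        have h2P' : ((Pn:ℝ) + 1) ≤ 2 * (Pn:ℝ) := by linarith
        have ha : ((2:ℝ) * Pn) ^ (-c) ≤ ((Pn:ℝ) + 1) ^ (-c) :=
          Real.rpow_le_rpow_of_nonpos (by linarith) h2P' (by linarith)
        have hb2 : ((2:ℝ) * Pn) ^ (-c) = 2 ^ (-c) * (Pn:ℝ) ^ (-c) :=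
          Real.mul_rpow (by norm_num) (by linarith)
        have hc2 : (1/4 : ℝ) ≤ 2 ^ (-c) := by
          have h1 : (2:ℝ) ^ (-2 : ℝ) ≤ 2 ^ (-c) :=
            Real.rpow_le_rpow_of_exponent_le (by norm_num) (by linarith)
          have h4 : (2:ℝ) ^ (-2 : ℝ) = 1/4 := by
            rw [show (-2 : ℝ) = ((-2 : ℤ) : ℝ) by norm_num, Real.rpow_intCast]
            norm_num
          exact h4 ▸ h1
        calc (1/4 : ℝ) * (Pn:ℝ) ^ (-c)
            ≤ 2 ^ (-c) * (Pn:ℝ) ^ (-c) :=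
              mul_le_mul_of_nonneg_right hc2 (Real.rpow_nonneg (by positivity) _)
          _ = ((2:ℝ) * Pn) ^ (-c) := hb2.symm
          _ ≤ ((Pn:ℝ) + 1) ^ (-c) := ha
      have hPmq : (Pn:ℝ)/2 ≤ (Pn:ℝ) - q := by linarith
      have hstep4 : (Pn:ℝ)/8 * ((Pn:ℝ)/2 * ((1/4 : ℝ) * (Pn:ℝ) ^ (-c))) ≤
          mu c Pn * m - F c m := by
        have t1 : (Pn:ℝ)/2 * ((1/4 : ℝ) * (Pn:ℝ) ^ (-c)) ≤
            ((Pn:ℝ) - q) * ((Pn:ℝ) + 1) ^ (-c) :=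
          mul_le_mul hPmq hstep3 (by positivity) (by linarith)
        have t2 : (Pn:ℝ)/8 * ((Pn:ℝ)/2 * ((1/4 : ℝ) * (Pn:ℝ) ^ (-c))) ≤
            (q:ℝ) * (((Pn:ℝ) - q) * ((Pn:ℝ) + 1) ^ (-c)) := by
          apply mul_le_mul hq_low t1 _ (by positivity)
          positivity
        have t3 : (q:ℝ) * (((Pn:ℝ) - q) * ((Pn:ℝ) + 1) ^ (-c)) ≤
            (q:ℝ) * (mu c Pn - mu c q) :=
          mul_le_mul_of_nonneg_left hstep2 (by positivity)
        linarith
      have e64 : (Pn:ℝ)/8 * ((Pn:ℝ)/2 * ((1/4 : ℝ) * (Pn:ℝ) ^ (-c))) = (Pn:ℝ) ^ (2 - c)/64 := by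
        rw [hP2c]; ring
      rw [e64] at hstep4
      have hεm : -(A/128 * (T:ℝ) ^ (2 - c)) ≤ ε * ((s:ℝ) - m) := by
        have hm_le : (m:ℝ) ≤ (Pn:ℝ) := by exact_mod_cast hmP
        have h1 : -(ε * (Pn:ℝ)) ≤ ε * ((s:ℝ) - m) := by
          have h0 : 0 ≤ ε * ((s:ℝ) - m + Pn) :=
            mul_nonneg hε_pos.le (by
              have : (0:ℝ) ≤ (s:ℝ) := Nat.cast_nonneg _
              linarith)
          have hexp : ε * ((s:ℝ) - m + Pn) = ε * ((s:ℝ) - m) + ε * Pn := by ring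
          linarith
        have h2 : ε * (Pn:ℝ) ≤ A/128 * (T:ℝ) ^ (2 - c) := by
          have h3 : ε * (Pn:ℝ) ≤ ε * (2 * (α * T)) := mul_le_mul_of_nonneg_left hPle hε_pos.le
          have e : ε * (2 * (α * (T:ℝ))) = A/128 * (T:ℝ) ^ (2 - c) := by
            rw [hε_def, hT2c, hK_def]
            field_simp
            ring
          linarith
        linarith
      linarith
  -- conclude
  have e1 : (mu c Pn - ε) * ((Pn:ℝ) - 2 * (s:ℝ)) =
      mu c Pn * (m:ℝ) - mu c Pn * s + ε * ((s:ℝ) - m) := by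
    rw [← hmcast]; ring
  have key : 2 * (A/1024 * (T:ℝ) ^ (2 - c)) ≤
      F c T - F c (T - s) - F c m + (mu c Pn - ε) * ((Pn:ℝ) - 2 * (s:ℝ)) := by
    rw [e1]
    linarith
  linarith
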